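/- Let N ≥ 1 and ζ_1,…,ζ_N, r_1,…,r_N ∈ ℂ with Re ζ_1 < Re ζ_2 < … < Re ζ_N, and fix k with 1 ≤ k ≤ N. Assume r_j ≠ 0 for j = 1,…,k−1. Define A_0(t) = 1 and A_k(t) = Σ_{1≤l_1<…<l_k≤N} (r_{l_1}⋯r_{l_k})² W(l_1,…,l_k)² exp(−2(ζ_{l_1}+…+ζ_{l_k})t) with W(l_1,…,l_k) = Π_{p<s, p,s∈{l_1,…,l_k}}(2ζ_s − 2ζ_p). Then lim_{t→+∞} exp(2ζ_k t) · A_k(t)/A_{k−1}(t) = r_k² · Π_{s=1}^{k−1} (2ζ_s − 2ζ_k)². (This is the statement that q_k(t) + 2ζ_k t tends to β_k^+ = q_1(0) + ln r_k² + ln Π_{s=1}^{k−1}(2ζ_s − 2ζ_k)² as t → +∞, written in exponentiated form.) -/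

import Mathlib

/-- The tau-functions of the complex Toda chain: `tauA N ζ r k t` is the sum over
all `k`-element subsets `{l_1 < … < l_k}` of `{1,…,N}` of
`(r_{l_1}⋯r_{l_k})² W(l_1,…,l_k)² exp(-2(ζ_{l_1}+…+ζ_{l_k}) t)`, where
`W(l_1,…,l_k) = ∏_{p<s} (2ζ_s - 2ζ_p)` is the Vandermonde determinant.
In particular `tauA N ζ r 0 t = 1`. -/
noncomputable def tauA (N : ℕ) (ζ r : Fin N → ℂ) (k : ℕ) (t : ℝ) : ℂ :=
  ∑ s ∈ Finset.powersetCard k (Finset.univ : Finset (Fin N)),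
    (∏ j ∈ s, r j) ^ 2 *
    (∏ p ∈ s, ∏ q ∈ s, if p < q then 2 * ζ q - 2 * ζ p else 1) ^ 2 *
    Complex.exp (-2 * (∑ j ∈ s, ζ j) * t)



open Filter Finset

/- auxiliary -/

lemma aux_cexp_tendsto_zero (c : ℂ) (hc : c.re < 0) :
    Tendsto (fun t : ℝ => Complex.exp (c * t)) atTop (nhds 0) := by
  rw [tendsto_zero_iff_norm_tendsto_zero]
  have h : ∀ t : ℝ, ‖Complex.exp (c * t)‖ = Real.exp (c.re * t) := by
    intro t
    rw [Complex.norm_exp]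
    norm_num [Complex.mul_re, Complex.ofReal_re, Complex.ofReal_im]
  simp only [h]
  exact Real.tendsto_exp_atBot.comp ((tendsto_const_mul_atBot_of_neg hc).mpr tendsto_id)

lemma aux_fin_le {n m : ℕ} (f : Fin n → Fin m) (hf : StrictMono f) (i : Fin n) :
    (i : ℕ) ≤ (f i : ℕ) := by
  obtain ⟨v, hv⟩ := i
  induction v with
  | zero => exact Nat.zero_le _
  | succ j ih =>
    have hj : j < n := Nat.lt_of_succ_lt hv
    have h1 := ih hj
    have h2 : f ⟨j, hj⟩ < f ⟨j + 1, hv⟩ := hf (by simp [Fin.lt_def])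
    have h3 := Fin.lt_def.mp h2
    have e1 : ((⟨j, hj⟩ : Fin n) : ℕ) = j := rfl
    have e2 : ((⟨j + 1, hv⟩ : Fin n) : ℕ) = j + 1 := rfl
    omega

/-- `Sm N m` is the set of the `m` smallest indices. -/
def Sm (N m : ℕ) : Finset (Fin N) := Finset.univ.filter (fun j => (j : ℕ) < m)

lemma Sm_card {N m : ℕ} (hm : m ≤ N) : (Sm N m).card = m := by
  classical
  have : Sm N m = Finset.map (Fin.castLEOrderEmb hm).toEmbedding Finset.univ := by
    ext j
    simp only [Sm, mem_filter, mem_univ, true_and, Finset.mem_map]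
    constructor
    · intro hj; exact ⟨⟨(j : ℕ), hj⟩, by ext; simp [Fin.castLEOrderEmb]⟩
    · rintro ⟨i, rfl⟩; simpa [Fin.castLEOrderEmb] using i.isLt
  rw [this, Finset.card_map, Finset.card_univ, Fintype.card_fin]

lemma Sm_mem {N m : ℕ} (j : Fin N) : j ∈ Sm N m ↔ (j : ℕ) < m := by
  simp [Sm]

/-- the key strict minimality: any other subset of the same cardinality has
strictly larger sum of real parts. -/
lemma sum_re_lt {N : ℕ} (ζ : Fin N → ℂ)
    (hsort : ∀ i j : Fin N, (i : ℕ) < (j : ℕ) → (ζ i).re < (ζ j).re)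
    {m : ℕ} (hm : m ≤ N) (s : Finset (Fin N)) (hcard : s.card = m) (hne : s ≠ Sm N m) :
    ∑ j ∈ Sm N m, (ζ j).re < ∑ j ∈ s, (ζ j).re := by
  classical
  -- the order isomorphism enumerating s
  set f : Fin m ≃o {x // x ∈ s} := s.orderIsoOfFin hcard with hf
  have hstrict : StrictMono (fun i : Fin m => ((f i : Fin N))) :=
    fun a b hab => by exact_mod_cast f.strictMono hab
  have hle : ∀ i : Fin m, (i : ℕ) ≤ ((f i : Fin N) : ℕ) := aux_fin_le _ hstrict
  -- sums as sums over Fin m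
  have hs_sum : ∀ g : Fin N → ℝ, ∑ j ∈ s, g j = ∑ i : Fin m, g (f i) := by
    intro g
    rw [← Finset.sum_attach s g]
    exact (Equiv.sum_comp f.toEquiv (fun x => g x)).symm
  have hSm_sum : ∀ g : Fin N → ℝ, ∑ j ∈ Sm N m, g j
      = ∑ i : Fin m, g (Fin.castLE hm i) := by
    intro g
    have : Sm N m = Finset.map (Fin.castLEOrderEmb hm).toEmbedding Finset.univ := by
      ext j
      simp only [Sm, mem_filter, mem_univ, true_and, Finset.mem_map]
      constructor
      · intro hj; exact ⟨⟨(j : ℕ), hj⟩, by ext; simp [Fin.castLEOrderEmb]⟩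
      · rintro ⟨i, rfl⟩; simpa [Fin.castLEOrderEmb] using i.isLt
    rw [this, Finset.sum_map]
    rfl
  rw [hs_sum (fun j => (ζ j).re), hSm_sum (fun j => (ζ j).re)]
  -- exists a strict index
  have hex : ∃ i : Fin m, (i : ℕ) < ((f i : Fin N) : ℕ) := by
    by_contra hcon
    push_neg at hcon
    have heq : ∀ i : Fin m, ((f i : Fin N) : ℕ) = (i : ℕ) :=
      fun i => le_antisymm (hcon i) (hle i)
    apply hne
    apply Finset.eq_of_subset_of_card_le
    · intro j hj
      rw [Sm_mem]
      obtain ⟨i, hi⟩ := f.toEquiv.surjective ⟨j, hj⟩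
      have : ((f i : Fin N) : ℕ) = (j : ℕ) :=
        congrArg (fun x : {x // x ∈ s} => ((x : Fin N) : ℕ)) hi
      rw [heq i] at this
      omega
    · rw [Sm_card hm, hcard]
  obtain ⟨i0, hi0⟩ := hex
  apply Finset.sum_lt_sum
  · intro i _
    rcases lt_or_eq_of_le (hle i) with h | h
    · exact le_of_lt (hsort _ _ (by simpa using h))
    · have : (Fin.castLE hm i : Fin N) = (f i : Fin N) := by
        ext; simpa using h
      simp [this]
  · exact ⟨i0, Finset.mem_univ _, hsort _ _ (by simpa using hi0)⟩

noncomputable def Vdm (N : ℕ) (ζ : Fin N → ℂ) (s : Finset (Fin N)) : ℂ :=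
  ∏ p ∈ s, ∏ q ∈ s, if p < q then 2 * ζ q - 2 * ζ p else 1

noncomputable def coeffC (N : ℕ) (ζ r : Fin N → ℂ) (s : Finset (Fin N)) : ℂ :=
  (∏ j ∈ s, r j) ^ 2 * (Vdm N ζ s) ^ 2


/-- The main asymptotic lemma. -/
lemma tendsto_exp_tauA (N : ℕ) (ζ r : Fin N → ℂ)
    (hsort : ∀ i j : Fin N, (i : ℕ) < (j : ℕ) → (ζ i).re < (ζ j).re)
    (m : ℕ) (hm : m ≤ N) :
    Tendsto (fun t : ℝ => Complex.exp (2 * (∑ j ∈ Sm N m, ζ j) * t) * tauA N ζ r m t)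
      atTop (nhds (coeffC N ζ r (Sm N m))) := by
  classical
  set σ : ℂ := ∑ j ∈ Sm N m, ζ j with hσ
  have hrw : ∀ t : ℝ, Complex.exp (2 * σ * t) * tauA N ζ r m t
      = ∑ s ∈ Finset.powersetCard m (Finset.univ : Finset (Fin N)),
          coeffC N ζ r s * Complex.exp ((2 * σ - 2 * ∑ j ∈ s, ζ j) * t) := by
    intro t
    rw [tauA, Finset.mul_sum]
    refine Finset.sum_congr rfl (fun s _ => ?_)
    rw [coeffC, Vdm]
    rw [mul_comm (Complex.exp _), mul_assoc, ← Complex.exp_add]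
    congr 1
    ring
  simp only [hrw]
  have hlim : ∀ s ∈ Finset.powersetCard m (Finset.univ : Finset (Fin N)),
      Tendsto (fun t : ℝ => coeffC N ζ r s * Complex.exp ((2 * σ - 2 * ∑ j ∈ s, ζ j) * t))
        atTop (nhds (if s = Sm N m then coeffC N ζ r s else 0)) := by
    intro s hs
    by_cases h : s = Sm N m
    · subst h
      simp only [if_pos rfl, ← hσ, sub_self, zero_mul, Complex.exp_zero, mul_one]
      exact tendsto_const_nhds
    · rw [if_neg h]
      rw [show (0 : ℂ) = coeffC N ζ r s * 0 by ring]
      apply Tendsto.const_mul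
      apply aux_cexp_tendsto_zero
      have hcard : s.card = m := (Finset.mem_powersetCard.mp hs).2
      have hlt := sum_re_lt ζ hsort hm s hcard h
      have h1 : (∑ j ∈ s, ζ j).re = ∑ j ∈ s, (ζ j).re := by
        simp [Complex.re_sum]
      have h2 : σ.re = ∑ j ∈ Sm N m, (ζ j).re := by
        simp [hσ, Complex.re_sum]
      have hre : ((2 : ℂ) * σ - 2 * ∑ j ∈ s, ζ j).re
          = 2 * σ.re - 2 * (∑ j ∈ s, ζ j).re := by
        simp [Complex.sub_re, Complex.mul_re]
      rw [hre, h1, h2]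
      linarith
  have := tendsto_finset_sum _ hlim
  have hmem : Sm N m ∈ Finset.powersetCard m (Finset.univ : Finset (Fin N)) := by
    rw [Finset.mem_powersetCard]
    exact ⟨Finset.subset_univ _, Sm_card hm⟩
  rwa [Finset.sum_ite_eq' _ (Sm N m) (fun s => coeffC N ζ r s), if_pos hmem] at this


/-- under the sorting condition `Re ζ_1 < … < Re ζ_N` and with
`r_1,…,r_{k-1} ≠ 0`, one has
`lim_{t→+∞} exp(2 ζ_k t) A_k(t)/A_{k-1}(t) = r_k² ∏_{s<k} (2ζ_s - 2ζ_k)²`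
(the exponentiated form of `q_k(t) + 2ζ_k t → β_k⁺` as `t → +∞`).
Here `k : Fin N` is 0-based: it is the paper's `k - 1`. -/
theorem stmt_8 (N : ℕ) (hN : 1 ≤ N) (ζ r : Fin N → ℂ)
    (hsort : ∀ i j : Fin N, (i : ℕ) < (j : ℕ) → (ζ i).re < (ζ j).re)
    (k : Fin N) (hr : ∀ j : Fin N, (j : ℕ) < (k : ℕ) → r j ≠ 0) :
    Filter.Tendsto
      (fun t : ℝ =>
        Complex.exp (2 * ζ k * t) * (tauA N ζ r ((k : ℕ) + 1) t / tauA N ζ r (k : ℕ) t))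
      Filter.atTop
      (nhds ((r k) ^ 2 *
        (∏ s ∈ Finset.univ.filter (fun s : Fin N => (s : ℕ) < (k : ℕ)),
          (2 * ζ s - 2 * ζ k)) ^ 2)) := by
  classical
  have hk1 : (k : ℕ) + 1 ≤ N := k.isLt
  have hk : (k : ℕ) ≤ N := le_of_lt k.isLt
  have hknot : k ∉ Sm N (k : ℕ) := by simp [Sm_mem]
  have hins : Sm N ((k : ℕ) + 1) = insert k (Sm N (k : ℕ)) := by
    ext j
    simp only [Sm_mem, Finset.mem_insert]
    constructor
    · intro hj
      rcases Nat.lt_succ_iff_lt_or_eq.mp hj with h | h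
      · exact Or.inr h
      · exact Or.inl (Fin.ext h)
    · rintro (rfl | hj)
      · exact Nat.lt_succ_self _
      · exact Nat.lt_succ_of_lt hj
  -- nonvanishing of c_k
  have hV : Vdm N ζ (Sm N (k : ℕ)) ≠ 0 := by
    rw [Vdm]
    apply Finset.prod_ne_zero_iff.mpr
    intro p _
    apply Finset.prod_ne_zero_iff.mpr
    intro q _
    split
    · rename_i hpq
      intro hzero
      have : 2 * ζ q = 2 * ζ p := by linear_combination hzero
      have h2 : (ζ q).re = (ζ p).re := by
        have := congrArg Complex.re this
        simp [Complex.mul_re] at this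
        linarith [this]
      exact absurd h2 (ne_of_gt (hsort p q hpq))
    · exact one_ne_zero
  have hP : (∏ j ∈ Sm N (k : ℕ), r j) ≠ 0 :=
    Finset.prod_ne_zero_iff.mpr (fun j hj => hr j ((Sm_mem j).mp hj))
  have hc0 : coeffC N ζ r (Sm N (k : ℕ)) ≠ 0 := by
    rw [coeffC]
    exact mul_ne_zero (pow_ne_zero _ hP) (pow_ne_zero _ hV)
  have L1 := tendsto_exp_tauA N ζ r hsort ((k : ℕ) + 1) hk1
  have L0 := tendsto_exp_tauA N ζ r hsort (k : ℕ) hk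
  have Ldiv := L1.div L0 hc0
  -- rewrite the function
  have hfun : ∀ t : ℝ,
      (Complex.exp (2 * (∑ j ∈ Sm N ((k : ℕ) + 1), ζ j) * t) * tauA N ζ r ((k : ℕ) + 1) t) /
        (Complex.exp (2 * (∑ j ∈ Sm N (k : ℕ), ζ j) * t) * tauA N ζ r (k : ℕ) t)
      = Complex.exp (2 * ζ k * t) * (tauA N ζ r ((k : ℕ) + 1) t / tauA N ζ r (k : ℕ) t) := by
    intro t
    have hsum : (∑ j ∈ Sm N ((k : ℕ) + 1), ζ j) = ζ k + ∑ j ∈ Sm N (k : ℕ), ζ j := by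
      rw [hins, Finset.sum_insert hknot]
    rw [hsum]
    rw [show (2 : ℂ) * (ζ k + ∑ j ∈ Sm N (k : ℕ), ζ j) * t
        = 2 * ζ k * t + 2 * (∑ j ∈ Sm N (k : ℕ), ζ j) * t by ring]
    rw [Complex.exp_add]
    rw [mul_comm (Complex.exp (2 * ζ k * t)) (Complex.exp (2 * (∑ j ∈ Sm N (k : ℕ), ζ j) * t))]
    rw [mul_assoc, mul_div_mul_left _ _ (Complex.exp_ne_zero _), mul_div_assoc]
  -- identify the limit value
  have hval : coeffC N ζ r (Sm N ((k : ℕ) + 1)) / coeffC N ζ r (Sm N (k : ℕ))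
      = (r k) ^ 2 * (∏ s ∈ Finset.univ.filter (fun s : Fin N => (s : ℕ) < (k : ℕ)),
          (2 * ζ s - 2 * ζ k)) ^ 2 := by
    have hVins : Vdm N ζ (Sm N ((k : ℕ) + 1))
        = (∏ p ∈ Sm N (k : ℕ), (2 * ζ k - 2 * ζ p)) * Vdm N ζ (Sm N (k : ℕ)) := by
      rw [hins, Vdm, Finset.prod_insert hknot]
      have hkk : ¬ (k < k) := lt_irrefl k
      have hinner : ∀ p ∈ Sm N (k : ℕ),
          (∏ q ∈ insert k (Sm N (k : ℕ)), if p < q then 2 * ζ q - 2 * ζ p else 1)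
          = (2 * ζ k - 2 * ζ p) * ∏ q ∈ Sm N (k : ℕ), (if p < q then 2 * ζ q - 2 * ζ p else 1) := by
        intro p hp
        rw [Finset.prod_insert hknot]
        have hpk : p < k := by
          rw [Fin.lt_def]; exact (Sm_mem p).mp hp
        rw [if_pos hpk]
      have houter : (∏ q ∈ insert k (Sm N (k : ℕ)), if k < q then 2 * ζ q - 2 * ζ k else 1) = 1 := by
        rw [Finset.prod_insert hknot, if_neg hkk, one_mul]
        apply Finset.prod_eq_one
        intro q hq
        have : ¬ (k < q) := by
          rw [Fin.lt_def]; push_neg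
          exact le_of_lt ((Sm_mem q).mp hq)
        rw [if_neg this]
      rw [houter, one_mul, Finset.prod_congr rfl hinner, Finset.prod_mul_distrib]
      rfl
    have hPins : (∏ j ∈ Sm N ((k : ℕ) + 1), r j) = r k * ∏ j ∈ Sm N (k : ℕ), r j := by
      rw [hins, Finset.prod_insert hknot]
    have hsq : (∏ p ∈ Sm N (k : ℕ), (2 * ζ k - 2 * ζ p)) ^ 2
        = (∏ s ∈ Finset.univ.filter (fun s : Fin N => (s : ℕ) < (k : ℕ)),
            (2 * ζ s - 2 * ζ k)) ^ 2 := by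
      rw [← Finset.prod_pow, ← Finset.prod_pow]
      apply Finset.prod_congr rfl
      intro p _
      ring
    have hPV : (∏ j ∈ Sm N (k : ℕ), r j) ^ 2 * (Vdm N ζ (Sm N (k : ℕ))) ^ 2 ≠ 0 :=
      mul_ne_zero (pow_ne_zero _ hP) (pow_ne_zero _ hV)
    rw [coeffC, coeffC, hVins, hPins, div_eq_iff hPV, ← hsq]
    ring
  rw [hval] at Ldiv
  refine Ldiv.congr (fun t => hfun t)
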